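/- For every p ∈ [0,1], the pair ((1+2p)/5, (3−2p)/5) is valid: for every ε > 0 there exists a graph G with |V(G)| > 1 such that deg(v) + 1 ≥ ((1+2p)/5 − ε)|V(G)| for every vertex v and |N(u) ∪ N(v)| ≤ (1 − (3−2p)/5 + ε)|V(G)| for every edge uv. -/

import Mathlib

open SimpleGraph Set



/-- `G` contains a copy of the double star `S(n,m)`. -/
def HasDoubleStar {V : Type*} (G : SimpleGraph V) (n m : ℕ) : Prop :=
  ∃ (u v : V) (A B : Finset V), G.Adj u v ∧
    ↑A ⊆ G.neighborSet u ∧ ↑B ⊆ G.neighborSet v ∧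
    v ∉ A ∧ u ∉ B ∧ Disjoint A B ∧ A.card = n ∧ B.card = m

/-- Ramsey number of the double star `S(n,m)`. -/
noncomputable def doubleStarRamsey (n m : ℕ) : ℕ :=
  sInf {N : ℕ | ∀ G : SimpleGraph (Fin N), HasDoubleStar G n m ∨ HasDoubleStar Gᶜ n m}

/-- `G` is a `(δ,η)`-graph. -/
def IsDEGraph {V : Type*} [Fintype V] (δ η : ℝ) (G : SimpleGraph V) : Prop :=
  1 < Fintype.card V ∧
  (∀ v : V, ((G.neighborSet v).ncard : ℝ) + 1 ≥ δ * Fintype.card V) ∧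
  (∀ u v : V, G.Adj u v →
    ((G.neighborSet u ∪ G.neighborSet v).ncard : ℝ) ≤ (1 - η) * Fintype.card V)

variable (m r : ℕ)

def cAdj (u v : ZMod 5 × ZMod m) : Prop :=
  (u.1 = v.1 ∧ u.2 ≠ v.2) ∨ (v.1 = u.1 + 1 ∧ (v.2 - u.2).val < r) ∨
    (u.1 = v.1 + 1 ∧ (u.2 - v.2).val < r)

def myG : SimpleGraph (ZMod 5 × ZMod m) where
  Adj := cAdj m r
  symm := by
    constructor
    rintro ⟨a, x⟩ ⟨b, y⟩ (⟨h1, h2⟩ | ⟨h1, h2⟩ | ⟨h1, h2⟩)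
    · exact Or.inl ⟨h1.symm, h2.symm⟩
    · exact Or.inr (Or.inr ⟨h1, h2⟩)
    · exact Or.inr (Or.inl ⟨h1, h2⟩)
  loopless := by
    constructor
    rintro ⟨a, x⟩ (⟨_, h2⟩ | ⟨h1, _⟩ | ⟨h1, _⟩)
    · exact h2 rfl
    · exact absurd (left_eq_add.mp h1) (by decide)
    · exact absurd (left_eq_add.mp h1) (by decide)

lemma neighborSet_eq (a : ZMod 5) (x : ZMod m) :
    (myG m r).neighborSet (a, x) =
      ({a} ×ˢ {x}ᶜ) ∪ ({a + 1} ×ˢ {y : ZMod m | (y - x).val < r}) ∪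
        ({a - 1} ×ˢ {y : ZMod m | (x - y).val < r}) := by
  ext ⟨b, y⟩
  simp only [mem_neighborSet, myG, cAdj, Set.mem_union, Set.mem_prod, Set.mem_singleton_iff,
    Set.mem_compl_iff, Set.mem_setOf_eq]
  constructor
  · rintro (⟨h1, h2⟩ | ⟨h1, h2⟩ | ⟨h1, h2⟩)
    · exact Or.inl (Or.inl ⟨h1.symm, fun h => h2 h.symm⟩)
    · exact Or.inl (Or.inr ⟨h1, h2⟩)
    · exact Or.inr ⟨by rw [h1]; ring, h2⟩
  · rintro ((⟨h1, h2⟩ | ⟨h1, h2⟩) | ⟨h1, h2⟩)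
    · exact Or.inl ⟨h1.symm, fun h => h2 h.symm⟩
    · exact Or.inr (Or.inl ⟨h1, h2⟩)
    · exact Or.inr (Or.inr ⟨by rw [h1]; ring, h2⟩)

lemma ncard_val_lt (m r : ℕ) [NeZero m] (hr : r ≤ m) :
    {z : ZMod m | z.val < r}.ncard = r := by
  have h : {z : ZMod m | z.val < r} = (fun i : ℕ => (i : ZMod m)) '' (Set.Iio r) := by
    ext z
    simp only [Set.mem_setOf_eq, Set.mem_image, Set.mem_Iio]
    constructor
    · intro hz; exact ⟨z.val, hz, ZMod.natCast_zmod_val z⟩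
    · rintro ⟨i, hi, rfl⟩; rwa [ZMod.val_cast_of_lt (lt_of_lt_of_le hi hr)]
  rw [h, Set.ncard_image_of_injOn]
  · simp [Set.ncard_eq_toFinset_card', Fintype.card_subtype_lt]
  · intro i hi j hj hij
    have := congrArg ZMod.val hij
    rwa [ZMod.val_cast_of_lt (lt_of_lt_of_le hi hr),
      ZMod.val_cast_of_lt (lt_of_lt_of_le hj hr)] at this

lemma ncard_sub_lt (m r : ℕ) [NeZero m] (hr : r ≤ m) (x : ZMod m) :
    {y : ZMod m | (y - x).val < r}.ncard = r := by
  have h : {y : ZMod m | (y - x).val < r} = (fun z => x + z) '' {z : ZMod m | z.val < r} := by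
    ext y
    simp only [Set.mem_setOf_eq, Set.mem_image]
    exact ⟨fun hy => ⟨y - x, hy, by ring⟩, by rintro ⟨z, hz, rfl⟩; simpa using hz⟩
  rw [h, Set.ncard_image_of_injective _ (add_right_injective x), ncard_val_lt m r hr]

lemma ncard_sub_lt' (m r : ℕ) [NeZero m] (hr : r ≤ m) (x : ZMod m) :
    {y : ZMod m | (x - y).val < r}.ncard = r := by
  have h : {y : ZMod m | (x - y).val < r} = (fun z => x - z) '' {z : ZMod m | z.val < r} := by
    ext y
    simp only [Set.mem_setOf_eq, Set.mem_image]
    exact ⟨fun hy => ⟨x - y, hy, by ring⟩, by rintro ⟨z, hz, rfl⟩; simpa using hz⟩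
  rw [h, Set.ncard_image_of_injective _ (sub_right_injective), ncard_val_lt m r hr]

lemma ncard_prod_singleton {α β : Type*} (a : α) (S : Set β) (_hS : S.Finite) :
    (({a} : Set α) ×ˢ S).ncard = S.ncard := by
  rw [Set.singleton_prod, Set.ncard_image_of_injective _ (fun x y h => (Prod.ext_iff.mp h).2)]

lemma disj_prod {α β : Type*} {a b : α} (h : a ≠ b) (S T : Set β) :
    Disjoint (({a} : Set α) ×ˢ S) (({b} : Set α) ×ˢ T) := by
  rw [Set.disjoint_left]
  rintro ⟨c, y⟩ ⟨hc, -⟩ ⟨hc', -⟩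
  exact h ((Set.eq_of_mem_singleton hc) ▸ Set.eq_of_mem_singleton hc' ▸ rfl)

lemma zmod5_ne1 (a : ZMod 5) : a ≠ a + 1 := fun h => absurd (left_eq_add.mp h) (by decide)
lemma zmod5_ne2 (a : ZMod 5) : a ≠ a - 1 := fun h => by
  rw [sub_eq_add_neg] at h
  exact absurd (left_eq_add.mp h) (by decide)
lemma zmod5_ne3 (a : ZMod 5) : a + 1 ≠ a - 1 := fun h => by
  rw [sub_eq_add_neg] at h
  exact absurd (add_left_cancel h) (by decide)
lemma ncard_neighborSet (m r : ℕ) [NeZero m] (hr : r ≤ m) (v : ZMod 5 × ZMod m) :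
    ((myG m r).neighborSet v).ncard + 1 = m + 2 * r := by
  obtain ⟨a, x⟩ := v
  rw [neighborSet_eq, Set.ncard_union_eq, Set.ncard_union_eq,
    ncard_prod_singleton _ _ (Set.toFinite _), ncard_prod_singleton _ _ (Set.toFinite _),
    ncard_prod_singleton _ _ (Set.toFinite _), ncard_sub_lt m r hr, ncard_sub_lt' m r hr]
  · have hc : ({x} : Set (ZMod m)).ncard + ({x}ᶜ : Set (ZMod m)).ncard = m := by
      rw [Set.ncard_add_ncard_compl, Nat.card_zmod]
    rw [Set.ncard_singleton] at hc
    omega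
  · exact disj_prod (zmod5_ne1 a) _ _
  · exact Set.disjoint_union_left.mpr
      ⟨disj_prod (zmod5_ne2 a) _ _, disj_prod (zmod5_ne3 a) _ _⟩

lemma ncard_prod_singleton_le {α β : Type*} [Fintype β] (a : α) (S : Set β) :
    (({a} : Set α) ×ˢ S).ncard ≤ S.ncard := by
  rw [ncard_prod_singleton _ _ (Set.toFinite _)]

lemma cross_bound (m r : ℕ) [NeZero m] (hr : r ≤ m) (a : ZMod 5) (x y : ZMod m) :
    ((myG m r).neighborSet (a, x) ∪ (myG m r).neighborSet (a + 1, y)).ncard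
      ≤ 2 * m + 2 * r := by
  have hsub : (myG m r).neighborSet (a, x) ∪ (myG m r).neighborSet (a + 1, y) ⊆
      (({a} : Set (ZMod 5)) ×ˢ (Set.univ : Set (ZMod m))) ∪
      (({a + 1} : Set (ZMod 5)) ×ˢ (Set.univ : Set (ZMod m))) ∪
      (({a - 1} : Set (ZMod 5)) ×ˢ {z : ZMod m | (x - z).val < r}) ∪
      (({a + 1 + 1} : Set (ZMod 5)) ×ˢ {z : ZMod m | (z - y).val < r}) := by
    rw [neighborSet_eq, neighborSet_eq]
    intro z hz
    have h1 : a + 1 - 1 = a := by ring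
    simp only [Set.mem_union, Set.mem_prod, Set.mem_singleton_iff, Set.mem_compl_iff,
      Set.mem_setOf_eq, Set.mem_univ, and_true, h1] at hz ⊢
    tauto
  calc ((myG m r).neighborSet (a, x) ∪ (myG m r).neighborSet (a + 1, y)).ncard
      ≤ _ := Set.ncard_le_ncard hsub (Set.toFinite _)
    _ ≤ (({a} : Set (ZMod 5)) ×ˢ (Set.univ : Set (ZMod m))).ncard +
        (({a + 1} : Set (ZMod 5)) ×ˢ (Set.univ : Set (ZMod m))).ncard +
        (({a - 1} : Set (ZMod 5)) ×ˢ {z : ZMod m | (x - z).val < r}).ncard +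
        (({a + 1 + 1} : Set (ZMod 5)) ×ˢ {z : ZMod m | (z - y).val < r}).ncard := by
      refine le_trans (Set.ncard_union_le _ _) ?_
      refine add_le_add (le_trans (Set.ncard_union_le _ _) ?_) le_rfl
      exact add_le_add (Set.ncard_union_le _ _) le_rfl
    _ ≤ m + m + r + r := by
      refine add_le_add (add_le_add (add_le_add ?_ ?_) ?_) ?_
      · exact (ncard_prod_singleton_le _ _).trans (by rw [Set.ncard_univ, Nat.card_zmod])
      · exact (ncard_prod_singleton_le _ _).trans (by rw [Set.ncard_univ, Nat.card_zmod])
      · exact (ncard_prod_singleton_le _ _).trans (by rw [ncard_sub_lt' m r hr])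
      · exact (ncard_prod_singleton_le _ _).trans (by rw [ncard_sub_lt m r hr])
    _ ≤ 2 * m + 2 * r := by omega

lemma same_bound (m r : ℕ) [NeZero m] (hr : r ≤ m) (a : ZMod 5) (x y : ZMod m) :
    ((myG m r).neighborSet (a, x) ∪ (myG m r).neighborSet (a, y)).ncard
      ≤ m + 2 * min (2 * r) m := by
  have hsub : (myG m r).neighborSet (a, x) ∪ (myG m r).neighborSet (a, y) ⊆
      (({a} : Set (ZMod 5)) ×ˢ (Set.univ : Set (ZMod m))) ∪
      (({a + 1} : Set (ZMod 5)) ×ˢ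
        ({z : ZMod m | (z - x).val < r} ∪ {z : ZMod m | (z - y).val < r})) ∪
      (({a - 1} : Set (ZMod 5)) ×ˢ
        ({z : ZMod m | (x - z).val < r} ∪ {z : ZMod m | (y - z).val < r})) := by
    rw [neighborSet_eq, neighborSet_eq]
    intro z hz
    simp only [Set.mem_union, Set.mem_prod, Set.mem_singleton_iff, Set.mem_compl_iff,
      Set.mem_setOf_eq, Set.mem_univ, and_true] at hz ⊢
    tauto
  have hmin : ∀ S T : Set (ZMod m), S.ncard = r → T.ncard = r →
      (S ∪ T).ncard ≤ min (2 * r) m := by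
    intro S T hS hT
    refine le_min ?_ ?_
    · refine (Set.ncard_union_le _ _).trans ?_
      omega
    · refine (Set.ncard_le_ncard (Set.subset_univ _) (Set.toFinite _)).trans ?_
      rw [Set.ncard_univ, Nat.card_zmod]
  calc ((myG m r).neighborSet (a, x) ∪ (myG m r).neighborSet (a, y)).ncard
      ≤ _ := Set.ncard_le_ncard hsub (Set.toFinite _)
    _ ≤ (({a} : Set (ZMod 5)) ×ˢ (Set.univ : Set (ZMod m))).ncard +
        (({a + 1} : Set (ZMod 5)) ×ˢ
          ({z : ZMod m | (z - x).val < r} ∪ {z : ZMod m | (z - y).val < r})).ncard +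
        (({a - 1} : Set (ZMod 5)) ×ˢ
          ({z : ZMod m | (x - z).val < r} ∪ {z : ZMod m | (y - z).val < r})).ncard := by
      refine le_trans (Set.ncard_union_le _ _) ?_
      exact add_le_add (Set.ncard_union_le _ _) le_rfl
    _ ≤ m + min (2 * r) m + min (2 * r) m := by
      refine add_le_add (add_le_add ?_ ?_) ?_
      · exact (ncard_prod_singleton_le _ _).trans (by rw [Set.ncard_univ, Nat.card_zmod])
      · exact (ncard_prod_singleton_le _ _).trans
          (hmin _ _ (ncard_sub_lt m r hr x) (ncard_sub_lt m r hr y))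
      · exact (ncard_prod_singleton_le _ _).trans
          (hmin _ _ (ncard_sub_lt' m r hr x) (ncard_sub_lt' m r hr y))
    _ ≤ m + 2 * min (2 * r) m := by omega

lemma edge_bound (m r : ℕ) [NeZero m] (hr : r ≤ m) (u v : ZMod 5 × ZMod m)
    (h : (myG m r).Adj u v) :
    ((myG m r).neighborSet u ∪ (myG m r).neighborSet v).ncard ≤ m + 2 * min (2 * r) m ∨
    ((myG m r).neighborSet u ∪ (myG m r).neighborSet v).ncard ≤ 2 * m + 2 * r := by
  obtain ⟨a, x⟩ := u
  obtain ⟨b, y⟩ := v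
  rcases h with ⟨h1, -⟩ | ⟨h1, -⟩ | ⟨h1, -⟩
  · subst h1
    exact Or.inl (same_bound m r hr a x y)
  · subst h1
    exact Or.inr (cross_bound m r hr a x y)
  · subst h1
    rw [Set.union_comm]
    exact Or.inr (cross_bound m r hr b y x)

theorem c5_sparsified_valid (p : ℝ) (hp0 : 0 ≤ p) (hp1 : p ≤ 1) :
    ∀ ε : ℝ, 0 < ε → ∃ (n : ℕ) (G : SimpleGraph (Fin n)),
      IsDEGraph ((1 + 2*p)/5 - ε) ((3 - 2*p)/5 - ε) G := by
  intro ε hε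
  set m : ℕ := max 1 ⌈2 / ε⌉₊ with hm_def
  have hm1 : 1 ≤ m := le_max_left _ _
  haveI : NeZero m := ⟨by omega⟩
  have hmε : 2 ≤ ε * m := by
    have h1 : (⌈2 / ε⌉₊ : ℝ) ≤ m := by
      exact_mod_cast Nat.cast_le.mpr (le_max_right 1 ⌈2 / ε⌉₊)
    have h2 : 2 / ε ≤ (⌈2 / ε⌉₊ : ℝ) := Nat.le_ceil _
    have := (div_le_iff₀ hε).mp (h2.trans h1)
    linarith
  set r : ℕ := ⌊p * m⌋₊ with hr_def
  have hpm0 : 0 ≤ p * m := mul_nonneg hp0 (Nat.cast_nonneg m)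
  have hrle : (r : ℝ) ≤ p * m := Nat.floor_le hpm0
  have hrge : p * m - 1 ≤ (r : ℝ) := by
    have := Nat.lt_floor_add_one (p * m)
    linarith
  have hrm : r ≤ m := by
    have : (r : ℝ) ≤ (m : ℝ) := hrle.trans (by nlinarith [Nat.cast_nonneg (α := ℝ) m])
    exact_mod_cast this
  have hcard : Fintype.card (ZMod 5 × ZMod m) = 5 * m := by
    rw [Fintype.card_prod, ZMod.card, ZMod.card]
  set e := Fintype.equivFinOfCardEq hcard with he_def
  set G := SimpleGraph.comap (⇑e.symm) (myG m r) with hG_def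
  refine ⟨5 * m, G, ?_⟩
  have hnbr : ∀ w : Fin (5 * m),
      G.neighborSet w = ⇑e.symm ⁻¹' ((myG m r).neighborSet (e.symm w)) := by
    intro w; ext z; simp [hG_def, SimpleGraph.comap]
  have hncard_pre : ∀ S : Set (ZMod 5 × ZMod m), (⇑e.symm ⁻¹' S).ncard = S.ncard := by
    intro S
    rw [← Equiv.image_eq_preimage_symm, Set.ncard_image_of_injective _ e.injective]
  have hcardV : (Fintype.card (Fin (5 * m)) : ℝ) = 5 * m := by
    rw [Fintype.card_fin]; push_cast; ring
  refine ⟨?_, ?_, ?_⟩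
  · rw [Fintype.card_fin]; omega
  · intro v
    rw [hnbr v, hncard_pre, hcardV]
    have hdeg := ncard_neighborSet m r hrm (e.symm v)
    have hdegR : (((myG m r).neighborSet (e.symm v)).ncard : ℝ) + 1 = m + 2 * r := by
      exact_mod_cast congrArg (Nat.cast (R := ℝ)) hdeg
    rw [hdegR]
    nlinarith [hε.le, Nat.cast_nonneg (α := ℝ) m]
  · intro u v huv
    have hadj : (myG m r).Adj (e.symm u) (e.symm v) := huv
    rw [hnbr u, hnbr v, ← Set.preimage_union, hncard_pre, hcardV]
    have hmR : (0 : ℝ) ≤ m := Nat.cast_nonneg m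
    rcases edge_bound m r hrm _ _ hadj with hb | hb
    · have hbR : ((((myG m r).neighborSet (e.symm u)) ∪ ((myG m r).neighborSet (e.symm v))).ncard : ℝ)
          ≤ m + 2 * min (2 * r) m := by exact_mod_cast hb
      rcases le_or_gt (2 * r) m with hc | hc
      · rw [min_eq_left hc] at hbR
        have hcR : (2 * r : ℝ) ≤ m := by exact_mod_cast hc
        push_cast at hbR
        nlinarith
      · rw [min_eq_right hc.le] at hbR
        have hcR : (m : ℝ) < 2 * r := by exact_mod_cast hc
        push_cast at hbR
        nlinarith
    · have hbR : ((((myG m r).neighborSet (e.symm u)) ∪ ((myG m r).neighborSet (e.symm v))).ncard : ℝ)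
          ≤ 2 * m + 2 * r := by exact_mod_cast hb
      nlinarith
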